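/- Let (θ₁, φ₁), (θ₂, φ₂), (θ₃, φ₃) be independent, each uniformly distributed on [0,2π]², and set hᵢ := sin θᵢ·sin φᵢ. Then for every real a and all real s₁, s₂, E[cos(s₁·a·(h₁ − h₃))·cos(s₂·a·(h₂ − h₃))] = (J₀(s₁·a/2)²·J₀(s₂·a/2)²/2)·(J₀((s₁ + s₂)·a/2)² + J₀((s₁ − s₂)·a/2)²). -/

import Mathlib

open Real MeasureTheory Finset

/-- Bessel function of the first kind of order zero (integral representation). -/
noncomputable def J₀ (x : ℝ) : ℝ :=
  (1 / (2 * π)) * ∫ t in (0:ℝ)..(2 * π), Real.cos (x * Real.sin t)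

/-- Expectation over three independent pairs of angles, each uniform on `[0, 2π]²`. -/
noncomputable def E6 (f : ℝ → ℝ → ℝ → ℝ → ℝ → ℝ → ℝ) : ℝ :=
  (1 / (2 * π) ^ 6) *
    ∫ θ₁ in (0:ℝ)..(2 * π), ∫ φ₁ in (0:ℝ)..(2 * π),
      ∫ θ₂ in (0:ℝ)..(2 * π), ∫ φ₂ in (0:ℝ)..(2 * π),
        ∫ θ₃ in (0:ℝ)..(2 * π), ∫ φ₃ in (0:ℝ)..(2 * π), f θ₁ φ₁ θ₂ φ₂ θ₃ φ₃

open intervalIntegral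

noncomputable def II (c : ℝ) : ℝ := ∫ t in (0:ℝ)..(2*π), Real.cos (c * Real.sin t)

lemma II_cont : Continuous II := by
  apply intervalIntegral.continuous_parametric_intervalIntegral_of_continuous' (μ := volume)
    (f := fun c t => Real.cos (c * Real.sin t))
  fun_prop

lemma II_even (c : ℝ) : II (-c) = II c := by
  unfold II; congr 1; ext t; rw [neg_mul]; exact Real.cos_neg _

-- periodic shift
lemma per_shift {f : ℝ → ℝ} (hp : Function.Periodic f (2*π)) (s : ℝ) :
    ∫ t in (0:ℝ)..(2*π), f (t + s) = ∫ t in (0:ℝ)..(2*π), f t := by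
  rw [intervalIntegral.integral_comp_add_right (a := (0:ℝ)) (b := 2*π) f s, zero_add]
  have := hp.intervalIntegral_add_eq s 0
  simpa [add_comm] using this

lemma sin_int_zero (c : ℝ) : ∫ t in (0:ℝ)..(2*π), Real.sin (c * Real.sin t) = 0 := by
  have h := intervalIntegral.integral_comp_sub_left (a := (0:ℝ)) (b := 2*π)
      (fun t => Real.sin (c * Real.sin t)) (2*π)
  simp only [sub_zero, sub_self] at h
  have h2 : ∀ t : ℝ, Real.sin (c * Real.sin (2*π - t)) = - Real.sin (c * Real.sin t) := by
    intro t
    rw [Real.sin_sub, Real.sin_two_pi, Real.cos_two_pi]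
    ring_nf
    exact Real.sin_neg _
  rw [intervalIntegral.integral_congr (g := fun t => - Real.sin (c * Real.sin t))
    (fun t _ => h2 t)] at h
  rw [intervalIntegral.integral_neg] at h
  linarith

lemma cos_add_int (c d : ℝ) :
    ∫ t in (0:ℝ)..(2*π), Real.cos (c * Real.sin t + d) = II c * Real.cos d := by
  have : ∀ t : ℝ, Real.cos (c * Real.sin t + d)
      = Real.cos (c * Real.sin t) * Real.cos d - Real.sin (c * Real.sin t) * Real.sin d := by
    intro t; rw [Real.cos_add]
  rw [intervalIntegral.integral_congr (fun t _ => this t)]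
  rw [intervalIntegral.integral_sub (Continuous.intervalIntegrable (by fun_prop) _ _) (Continuous.intervalIntegrable (by fun_prop) _ _),
    intervalIntegral.integral_mul_const, intervalIntegral.integral_mul_const,
    sin_int_zero]
  simp [II]

lemma cos_cos_int (c : ℝ) : ∫ t in (0:ℝ)..(2*π), Real.cos (c * Real.cos t) = II c := by
  have hp : Function.Periodic (fun t => Real.cos (c * Real.sin t)) (2*π) := by
    intro t; simp [Real.sin_add_two_pi]
  have := per_shift hp (π/2)
  simp only [Real.sin_add_pi_div_two] at this
  rw [this]; rfl

lemma swap_int {F : ℝ → ℝ → ℝ} (hF : Continuous (Function.uncurry F)) :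
    (∫ u in (0:ℝ)..(2*π), ∫ v in (0:ℝ)..(2*π), F u v)
      = ∫ v in (0:ℝ)..(2*π), ∫ u in (0:ℝ)..(2*π), F u v := by
  have hle : (0:ℝ) ≤ 2*π := by positivity
  simp only [intervalIntegral.integral_of_le hle]
  apply MeasureTheory.integral_integral_swap
  rw [Measure.prod_restrict, ← Measure.volume_eq_prod]
  exact (hF.continuousOn.integrableOn_compact (isCompact_Icc.prod isCompact_Icc)).mono_set
    (Set.prod_mono Set.Ioc_subset_Icc_self Set.Ioc_subset_Icc_self)

lemma key (z : ℝ) : (∫ θ in (0:ℝ)..(2*π), II (2 * z * Real.sin θ)) = II z ^ 2 := by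
  have hle : (0:ℝ) ≤ 2*π := by positivity
  have hsq : II z ^ 2 = ∫ u in (0:ℝ)..(2*π), ∫ v in (0:ℝ)..(2*π),
      Real.cos (z * Real.sin u) * Real.cos (z * Real.sin v) := by
    simp only [intervalIntegral.integral_const_mul, intervalIntegral.integral_mul_const]
    rw [pow_two]; rfl
  -- inner product-to-sum and shift
  have step1 : ∀ u : ℝ, (∫ v in (0:ℝ)..(2*π), Real.cos (z * Real.sin u) * Real.cos (z * Real.sin v))
      = ∫ v in (0:ℝ)..(2*π), Real.cos (z * Real.sin u - z * Real.sin v) := by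
    intro u
    have expand : ∀ v : ℝ, Real.cos (z * Real.sin u) * Real.cos (z * Real.sin v)
        = (Real.cos (z * Real.sin u - z * Real.sin v)
            + Real.cos (z * Real.sin u + z * Real.sin v)) / 2 := by
      intro v
      have := Real.two_mul_cos_mul_cos (z * Real.sin u) (z * Real.sin v)
      linarith
    rw [intervalIntegral.integral_congr (fun v _ => expand v)]
    have hshift : (∫ v in (0:ℝ)..(2*π), Real.cos (z * Real.sin u + z * Real.sin v))
        = ∫ v in (0:ℝ)..(2*π), Real.cos (z * Real.sin u - z * Real.sin v) := by
      have hp : Function.Periodic (fun v => Real.cos (z * Real.sin u + z * Real.sin v)) (2*π) := by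
        intro t; simp [Real.sin_add_two_pi]
      have h := per_shift hp π
      simp only [Real.sin_add_pi] at h
      rw [← h]
      apply intervalIntegral.integral_congr; intro v _; ring_nf
    rw [intervalIntegral.integral_div,
      intervalIntegral.integral_add (Continuous.intervalIntegrable (by fun_prop) _ _)
        (Continuous.intervalIntegrable (by fun_prop) _ _), hshift]
    ring
  -- substitution v = u - w
  have step2 : ∀ u : ℝ, (∫ v in (0:ℝ)..(2*π), Real.cos (z * Real.sin u - z * Real.sin v))
      = ∫ w in (0:ℝ)..(2*π), Real.cos (2 * z * Real.sin (w/2) * Real.cos (u - w/2)) := by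
    intro u
    have hp : Function.Periodic (fun v => Real.cos (z * Real.sin u - z * Real.sin v)) (2*π) := by
      intro t; simp [Real.sin_add_two_pi]
    have h := intervalIntegral.integral_comp_sub_left (a := (0:ℝ)) (b := 2*π)
        (fun v => Real.cos (z * Real.sin u - z * Real.sin v)) u
    have hper := hp.intervalIntegral_add_eq (u - 2*π) 0
    simp only [zero_add] at hper
    have h2pi : u - 2*π + 2*π = u := by ring
    rw [sub_zero] at h
    rw [h2pi] at hper
    rw [← hper, ← h]
    apply intervalIntegral.integral_congr; intro w _
    have : z * Real.sin u - z * Real.sin (u - w)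
        = 2 * z * Real.sin (w/2) * Real.cos (u - w/2) := by
      have hs := Real.sin_sub_sin u (u - w)
      have e1 : (u - (u - w))/2 = w/2 := by ring
      have e2 : (u + (u - w))/2 = u - w/2 := by ring
      rw [e1, e2] at hs
      calc z * Real.sin u - z * Real.sin (u - w) = z * (Real.sin u - Real.sin (u - w)) := by ring
        _ = 2 * z * Real.sin (w/2) * Real.cos (u - w/2) := by rw [hs]; ring
    simp only []
    rw [this]
  -- combine, swap, inner shift
  have step3 : II z ^ 2 = ∫ w in (0:ℝ)..(2*π), ∫ u in (0:ℝ)..(2*π),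
      Real.cos (2 * z * Real.sin (w/2) * Real.cos (u - w/2)) := by
    rw [hsq, intervalIntegral.integral_congr (fun u _ => (step1 u).trans (step2 u))]
    exact swap_int (by fun_prop)
  have step4 : ∀ w : ℝ, (∫ u in (0:ℝ)..(2*π),
      Real.cos (2 * z * Real.sin (w/2) * Real.cos (u - w/2))) = II (2 * z * Real.sin (w/2)) := by
    intro w
    have hp : Function.Periodic (fun u => Real.cos (2 * z * Real.sin (w/2) * Real.cos u)) (2*π) := by
      intro t; simp [Real.cos_add_two_pi]
    have h := per_shift hp (-(w/2))
    simp only [← sub_eq_add_neg] at h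
    rw [h, cos_cos_int]
  have step5 : II z ^ 2 = ∫ w in (0:ℝ)..(2*π), II (2 * z * Real.sin (w/2)) := by
    rw [step3, intervalIntegral.integral_congr (fun w _ => step4 w)]
  -- now change variables w/2 -> θ and fold [0,2π] to two copies of [0,π]
  have hdiv : (∫ w in (0:ℝ)..(2*π), II (2 * z * Real.sin (w/2)))
      = 2 * ∫ θ in (0:ℝ)..π, II (2 * z * Real.sin θ) := by
    have := intervalIntegral.integral_comp_div (a := (0:ℝ)) (b := 2*π)
      (f := fun θ => II (2 * z * Real.sin θ)) (c := (2:ℝ)) two_ne_zero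
    rw [this]
    norm_num [mul_comm, mul_div_assoc]
  have hsplit : (∫ θ in (0:ℝ)..(2*π), II (2 * z * Real.sin θ))
      = 2 * ∫ θ in (0:ℝ)..π, II (2 * z * Real.sin θ) := by
    have hint : ∀ c d : ℝ, IntervalIntegrable (fun θ => II (2 * z * Real.sin θ)) volume c d := by
      intro c d; exact (II_cont.comp (by fun_prop)).intervalIntegrable _ _
    have hadj := intervalIntegral.integral_add_adjacent_intervals (a := (0:ℝ)) (b := π)
      (c := 2*π) (hint 0 π) (hint π (2*π))
    have hsecond : (∫ θ in π..(2*π), II (2 * z * Real.sin θ))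
        = ∫ θ in (0:ℝ)..π, II (2 * z * Real.sin θ) := by
      have h := intervalIntegral.integral_comp_add_right (a := (0:ℝ)) (b := π)
        (fun θ => II (2 * z * Real.sin θ)) π
      simp only [zero_add] at h
      have : (2:ℝ)*π = π + π := by ring
      rw [this, ← h]
      apply intervalIntegral.integral_congr; intro θ _
      simp only [Real.sin_add_pi]
      rw [show 2 * z * -Real.sin θ = -(2 * z * Real.sin θ) by ring, II_even]
    rw [← hadj, hsecond]; ring
  rw [hsplit, ← hdiv, ← step5]

lemma key' (c : ℝ) : (∫ θ in (0:ℝ)..(2*π), II (c * Real.sin θ)) = II (c/2) ^ 2 := by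
  have := key (c/2)
  rw [← this]
  apply intervalIntegral.integral_congr; intro θ _
  exact congrArg II (by ring)

lemma II_intable (c x y : ℝ) : IntervalIntegrable (fun θ => II (c * Real.sin θ)) volume x y :=
  (II_cont.comp (by fun_prop)).intervalIntegrable _ _

lemma inner3 (q₁ q₂ A B : ℝ) :
    (∫ θ in (0:ℝ)..(2*π), ∫ φ in (0:ℝ)..(2*π),
      Real.cos (q₁ * (A - Real.sin θ * Real.sin φ)) * Real.cos (q₂ * (B - Real.sin θ * Real.sin φ)))
    = (II ((q₁+q₂)/2) ^ 2 * Real.cos (q₁*A + q₂*B)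
        + II ((q₁-q₂)/2) ^ 2 * Real.cos (q₁*A - q₂*B)) / 2 := by
  have expand : ∀ θ φ : ℝ,
      Real.cos (q₁ * (A - Real.sin θ * Real.sin φ)) * Real.cos (q₂ * (B - Real.sin θ * Real.sin φ))
      = (Real.cos ((-(q₁-q₂)) * Real.sin θ * Real.sin φ + (q₁*A - q₂*B))
          + Real.cos ((-(q₁+q₂)) * Real.sin θ * Real.sin φ + (q₁*A + q₂*B))) / 2 := by
    intro θ φ
    have h := Real.two_mul_cos_mul_cos (q₁ * (A - Real.sin θ * Real.sin φ))
      (q₂ * (B - Real.sin θ * Real.sin φ))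
    have e1 : q₁ * (A - Real.sin θ * Real.sin φ) - q₂ * (B - Real.sin θ * Real.sin φ)
        = (-(q₁-q₂)) * Real.sin θ * Real.sin φ + (q₁*A - q₂*B) := by ring
    have e2 : q₁ * (A - Real.sin θ * Real.sin φ) + q₂ * (B - Real.sin θ * Real.sin φ)
        = (-(q₁+q₂)) * Real.sin θ * Real.sin φ + (q₁*A + q₂*B) := by ring
    rw [e1, e2] at h
    linarith
  calc (∫ θ in (0:ℝ)..(2*π), ∫ φ in (0:ℝ)..(2*π),
      Real.cos (q₁ * (A - Real.sin θ * Real.sin φ)) * Real.cos (q₂ * (B - Real.sin θ * Real.sin φ)))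
      = ∫ θ in (0:ℝ)..(2*π),
          (II ((-(q₁-q₂)) * Real.sin θ) * Real.cos (q₁*A - q₂*B)
            + II ((-(q₁+q₂)) * Real.sin θ) * Real.cos (q₁*A + q₂*B)) / 2 := by
        apply intervalIntegral.integral_congr; intro θ _
        simp only []
        rw [intervalIntegral.integral_congr (fun φ _ => expand θ φ)]
        rw [intervalIntegral.integral_div,
          intervalIntegral.integral_add (Continuous.intervalIntegrable (by fun_prop) _ _)
            (Continuous.intervalIntegrable (by fun_prop) _ _)]
        have r1 : ∀ φ : ℝ, (-(q₁-q₂)) * Real.sin θ * Real.sin φ + (q₁*A - q₂*B)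
            = ((-(q₁-q₂)) * Real.sin θ) * Real.sin φ + (q₁*A - q₂*B) := by intro φ; ring
        rw [intervalIntegral.integral_congr (fun φ _ => congrArg Real.cos (r1 φ)), cos_add_int]
        have r2 : ∀ φ : ℝ, (-(q₁+q₂)) * Real.sin θ * Real.sin φ + (q₁*A + q₂*B)
            = ((-(q₁+q₂)) * Real.sin θ) * Real.sin φ + (q₁*A + q₂*B) := by intro φ; ring
        rw [intervalIntegral.integral_congr (fun φ _ => congrArg Real.cos (r2 φ)), cos_add_int]
    _ = ((∫ θ in (0:ℝ)..(2*π), II ((-(q₁-q₂)) * Real.sin θ)) * Real.cos (q₁*A - q₂*B)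
          + (∫ θ in (0:ℝ)..(2*π), II ((-(q₁+q₂)) * Real.sin θ)) * Real.cos (q₁*A + q₂*B)) / 2 := by
        rw [intervalIntegral.integral_div,
          intervalIntegral.integral_add ((II_intable _ _ _).mul_const _) ((II_intable _ _ _).mul_const _),
          intervalIntegral.integral_mul_const, intervalIntegral.integral_mul_const]
    _ = (II ((q₁+q₂)/2) ^ 2 * Real.cos (q₁*A + q₂*B)
          + II ((q₁-q₂)/2) ^ 2 * Real.cos (q₁*A - q₂*B)) / 2 := by
        rw [key', key']
        have em : II (-(q₁-q₂)/2) = II ((q₁-q₂)/2) := by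
          rw [show -(q₁-q₂)/2 = -((q₁-q₂)/2) by ring, II_even]
        have ep : II (-(q₁+q₂)/2) = II ((q₁+q₂)/2) := by
          rw [show -(q₁+q₂)/2 = -((q₁+q₂)/2) by ring, II_even]
        rw [em, ep]; ring

lemma cos_int (c : ℝ) : (∫ t in (0:ℝ)..(2*π), Real.cos (c * Real.sin t)) = II c := rfl

lemma main_int (q₁ q₂ : ℝ) :
    (∫ θ₁ in (0:ℝ)..(2*π), ∫ φ₁ in (0:ℝ)..(2*π), ∫ θ₂ in (0:ℝ)..(2*π), ∫ φ₂ in (0:ℝ)..(2*π),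
      ∫ θ₃ in (0:ℝ)..(2*π), ∫ φ₃ in (0:ℝ)..(2*π),
        Real.cos (q₁ * (Real.sin θ₁ * Real.sin φ₁ - Real.sin θ₃ * Real.sin φ₃)) *
        Real.cos (q₂ * (Real.sin θ₂ * Real.sin φ₂ - Real.sin θ₃ * Real.sin φ₃)))
    = II (q₁/2) ^ 2 * II (q₂/2) ^ 2 * ((II ((q₁+q₂)/2) ^ 2 + II ((q₁-q₂)/2) ^ 2) / 2) := by
  set Kp := II ((q₁+q₂)/2) ^ 2 with hKp
  set Km := II ((q₁-q₂)/2) ^ 2 with hKm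
  calc (∫ θ₁ in (0:ℝ)..(2*π), ∫ φ₁ in (0:ℝ)..(2*π), ∫ θ₂ in (0:ℝ)..(2*π), ∫ φ₂ in (0:ℝ)..(2*π),
      ∫ θ₃ in (0:ℝ)..(2*π), ∫ φ₃ in (0:ℝ)..(2*π),
        Real.cos (q₁ * (Real.sin θ₁ * Real.sin φ₁ - Real.sin θ₃ * Real.sin φ₃)) *
        Real.cos (q₂ * (Real.sin θ₂ * Real.sin φ₂ - Real.sin θ₃ * Real.sin φ₃)))
      = ∫ θ₁ in (0:ℝ)..(2*π), ∫ φ₁ in (0:ℝ)..(2*π), ∫ θ₂ in (0:ℝ)..(2*π), ∫ φ₂ in (0:ℝ)..(2*π),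
          (Kp * Real.cos (q₁ * (Real.sin θ₁ * Real.sin φ₁) + q₂ * (Real.sin θ₂ * Real.sin φ₂))
            + Km * Real.cos (q₁ * (Real.sin θ₁ * Real.sin φ₁) - q₂ * (Real.sin θ₂ * Real.sin φ₂))) / 2 := by
        apply intervalIntegral.integral_congr; intro θ₁ _
        apply intervalIntegral.integral_congr; intro φ₁ _
        apply intervalIntegral.integral_congr; intro θ₂ _
        apply intervalIntegral.integral_congr; intro φ₂ _
        simpa using inner3 q₁ q₂ (Real.sin θ₁ * Real.sin φ₁) (Real.sin θ₂ * Real.sin φ₂)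
    _ = ∫ θ₁ in (0:ℝ)..(2*π), ∫ φ₁ in (0:ℝ)..(2*π), ∫ θ₂ in (0:ℝ)..(2*π),
          ((Kp + Km)/2 * Real.cos (q₁ * (Real.sin θ₁ * Real.sin φ₁))) * II (q₂ * Real.sin θ₂) := by
        apply intervalIntegral.integral_congr; intro θ₁ _
        apply intervalIntegral.integral_congr; intro φ₁ _
        apply intervalIntegral.integral_congr; intro θ₂ _
        simp only []
        set A := Real.sin θ₁ * Real.sin φ₁
        have e1 : ∀ φ : ℝ, q₁ * A + q₂ * (Real.sin θ₂ * Real.sin φ)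
            = (q₂ * Real.sin θ₂) * Real.sin φ + q₁ * A := by intro φ; ring
        have e2 : ∀ φ : ℝ, q₁ * A - q₂ * (Real.sin θ₂ * Real.sin φ)
            = (-(q₂ * Real.sin θ₂)) * Real.sin φ + q₁ * A := by intro φ; ring
        have : ∀ φ : ℝ, (Kp * Real.cos (q₁ * A + q₂ * (Real.sin θ₂ * Real.sin φ))
            + Km * Real.cos (q₁ * A - q₂ * (Real.sin θ₂ * Real.sin φ))) / 2
            = (Kp * Real.cos ((q₂ * Real.sin θ₂) * Real.sin φ + q₁ * A)
              + Km * Real.cos ((-(q₂ * Real.sin θ₂)) * Real.sin φ + q₁ * A)) / 2 := by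
          intro φ; rw [e1 φ, e2 φ]
        rw [intervalIntegral.integral_congr (fun φ _ => this φ)]
        rw [intervalIntegral.integral_div,
          intervalIntegral.integral_add (Continuous.intervalIntegrable (by fun_prop) _ _)
            (Continuous.intervalIntegrable (by fun_prop) _ _),
          intervalIntegral.integral_const_mul, intervalIntegral.integral_const_mul,
          cos_add_int, cos_add_int, II_even]
        ring
    _ = ∫ θ₁ in (0:ℝ)..(2*π), ∫ φ₁ in (0:ℝ)..(2*π),
          (II (q₂/2) ^ 2 * ((Kp + Km)/2)) * Real.cos ((q₁ * Real.sin θ₁) * Real.sin φ₁) := by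
        apply intervalIntegral.integral_congr; intro θ₁ _
        apply intervalIntegral.integral_congr; intro φ₁ _
        simp only []
        rw [intervalIntegral.integral_const_mul, key']
        rw [show q₁ * (Real.sin θ₁ * Real.sin φ₁) = (q₁ * Real.sin θ₁) * Real.sin φ₁ by ring]
        ring
    _ = ∫ θ₁ in (0:ℝ)..(2*π),
          (II (q₂/2) ^ 2 * ((Kp + Km)/2)) * II (q₁ * Real.sin θ₁) := by
        apply intervalIntegral.integral_congr; intro θ₁ _
        simp only []
        rw [intervalIntegral.integral_const_mul, cos_int]
    _ = II (q₁/2) ^ 2 * II (q₂/2) ^ 2 * ((Kp + Km) / 2) := by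
        rw [intervalIntegral.integral_const_mul, key']
        ring

theorem stmt_9 (a s₁ s₂ : ℝ) :
    E6 (fun θ₁ φ₁ θ₂ φ₂ θ₃ φ₃ =>
      Real.cos (s₁ * a * (Real.sin θ₁ * Real.sin φ₁ - Real.sin θ₃ * Real.sin φ₃)) *
      Real.cos (s₂ * a * (Real.sin θ₂ * Real.sin φ₂ - Real.sin θ₃ * Real.sin φ₃)))
    = ((J₀ (s₁ * a / 2)) ^ 2 * (J₀ (s₂ * a / 2)) ^ 2 / 2) *
        ((J₀ ((s₁ + s₂) * a / 2)) ^ 2 + (J₀ ((s₁ - s₂) * a / 2)) ^ 2) := by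
  unfold E6
  simp only []
  rw [main_int (s₁*a) (s₂*a)]
  have hJ : ∀ x, J₀ x = (1/(2*π)) * II x := fun x => rfl
  have e1 : II ((s₁*a + s₂*a)/2) = II ((s₁+s₂)*a/2) := congrArg II (by ring)
  have e2 : II ((s₁*a - s₂*a)/2) = II ((s₁-s₂)*a/2) := congrArg II (by ring)
  rw [e1, e2, hJ, hJ, hJ, hJ]
  have hπ : (π:ℝ) ≠ 0 := Real.pi_ne_zero
  set A1 := II (s₁ * a / 2)
  set A2 := II (s₂ * a / 2)
  set Ap := II ((s₁ + s₂) * a / 2)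
  set Am := II ((s₁ - s₂) * a / 2)
  field_simp
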